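/- Let r ≥ 2 be an integer, let G be a finite triangle-free 4-sunspot-free graph, and let (L_0, …, L_r) be an r-leveling in G. Let H be a hole of length at least 6 in the subgraph induced on L_r and let x ∈ L_{r−1}. Then there is no x-sector of length at most 2 in H. -/

import Mathlib

open SimpleGraph
open Fin.NatCast Fin.CommRing

/-- A `4`-sunspot in `G`: seven pairwise distinct vertices whose induced edge set is exactly
`{x₁x₂, x₂x₃, x₃x₄, x₄x₁, x₁y₁, x₂y₂, x₃y₃}`. -/
def IsFourSunspot {V : Type} (G : SimpleGraph V) (x₁ x₂ x₃ x₄ y₁ y₂ y₃ : V) : Prop :=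
  [x₁, x₂, x₃, x₄, y₁, y₂, y₃].Nodup ∧
  G.Adj x₁ x₂ ∧ G.Adj x₂ x₃ ∧ G.Adj x₃ x₄ ∧ G.Adj x₄ x₁ ∧
  G.Adj x₁ y₁ ∧ G.Adj x₂ y₂ ∧ G.Adj x₃ y₃ ∧
  ¬ G.Adj x₁ x₃ ∧ ¬ G.Adj x₂ x₄ ∧
  ¬ G.Adj x₁ y₂ ∧ ¬ G.Adj x₁ y₃ ∧ ¬ G.Adj x₂ y₁ ∧ ¬ G.Adj x₂ y₃ ∧
  ¬ G.Adj x₃ y₁ ∧ ¬ G.Adj x₃ y₂ ∧ ¬ G.Adj x₄ y₁ ∧ ¬ G.Adj x₄ y₂ ∧ ¬ G.Adj x₄ y₃ ∧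
  ¬ G.Adj y₁ y₂ ∧ ¬ G.Adj y₁ y₃ ∧ ¬ G.Adj y₂ y₃

/-- `G` is `4`-sunspot-free if there is no `4`-sunspot in `G`. -/
def FourSunspotFree {V : Type} (G : SimpleGraph V) : Prop :=
  ∀ x₁ x₂ x₃ x₄ y₁ y₂ y₃ : V, ¬ IsFourSunspot G x₁ x₂ x₃ x₄ y₁ y₂ y₃

/-- The `t`-sun: a `t`-vertex cycle (on `Sum.inl` vertices) together with a pendant
(degree-one) neighbor `Sum.inr i` for each cycle vertex `Sum.inl i`. -/
def Sun (t : ℕ) : SimpleGraph (ZMod t ⊕ ZMod t) :=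
  SimpleGraph.fromEdgeSet
    ((Set.range fun i : ZMod t => s(Sum.inl i, Sum.inl (i + 1))) ∪
     (Set.range fun i : ZMod t => s(Sum.inl i, Sum.inr i)))

/-- `G` is `t`-sun-free: no induced subgraph of `G` is a `t`-sun. -/
def SunFree (t : ℕ) {V : Type} (G : SimpleGraph V) : Prop :=
  IsEmpty (Sun t ↪g G)

/-- The bull: a triangle `0,1,2` with pendant vertices `3` (adjacent to `0`)
and `4` (adjacent to `1`). -/
def Bull : SimpleGraph (Fin 5) :=
  SimpleGraph.fromEdgeSet {s(0, 1), s(1, 2), s(0, 2), s(0, 3), s(1, 4)}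

/-- `G` is bull-free: no induced subgraph of `G` is a bull. -/
def BullFree {V : Type} (G : SimpleGraph V) : Prop :=
  IsEmpty (Bull ↪g G)

/-- A hole in `G`: an induced cycle on at least `4` vertices, given as a graph embedding
of the cycle graph. -/
structure Hole {V : Type} (G : SimpleGraph V) where
  len : ℕ
  four_le : 4 ≤ len
  emb : SimpleGraph.cycleGraph len ↪g G

/-- The vertex set of a hole. -/
def Hole.verts {V : Type} {G : SimpleGraph V} (H : Hole G) : Set V :=
  Set.range H.emb

/-- The edge set of a hole. -/
def Hole.edges {V : Type} {G : SimpleGraph V} (H : Hole G) : Set (Sym2 V) :=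
  {e | ∃ i j : Fin H.len, (SimpleGraph.cycleGraph H.len).Adj i j ∧ e = s(H.emb i, H.emb j)}

/-- `G` is liberal: for distinct non-adjacent `x, y`, neither dominates the other. -/
def Liberal {V : Type} (G : SimpleGraph V) : Prop :=
  ∀ x y : V, x ≠ y → ¬ G.Adj x y →
    (G.neighborSet x \ G.neighborSet y).Nonempty ∧
    (G.neighborSet y \ G.neighborSet x).Nonempty

/-- `G` is non-degenerate: every vertex has degree at least `χ(G) - 1`. -/
def NonDegenerate {V : Type} (G : SimpleGraph V) : Prop :=
  ∀ v : V, G.chromaticNumber ≤ ((G.neighborSet v).ncard : ℕ∞) + 1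

/-- `G` is flapless: for every hole `H` of length at least `6` in `G`, there is no `H`-flap,
i.e. no `4`-hole sharing an edge with `H`. -/
def Flapless {V : Type} (G : SimpleGraph V) : Prop :=
  ∀ H : Hole G, 6 ≤ H.len → ∀ F : Hole G, F.len = 4 → ∀ e ∈ F.edges, e ∉ H.edges

/-- An `r`-leveling in `G`: pairwise disjoint nonempty sets `L 0, …, L r` such that every
vertex of `L i` (`i ≥ 1`) has a neighbor in `L (i-1)`, and edges only join consecutive levels. -/
def IsLeveling {V : Type} (G : SimpleGraph V) (r : ℕ) (L : ℕ → Set V) : Prop :=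
  (∀ i, i ≤ r → (L i).Nonempty) ∧
  (∀ i j, i ≤ r → j ≤ r → i ≠ j → Disjoint (L i) (L j)) ∧
  (∀ i, 1 ≤ i → i ≤ r → ∀ v ∈ L i, ∃ u ∈ L (i - 1), G.Adj u v) ∧
  (∀ i j, i ≤ r → j ≤ r → i ≠ j →
    ∀ u ∈ L i, ∀ v ∈ L j, G.Adj u v → i = j + 1 ∨ j = i + 1)

/-- `x` has no sector of length at most `2` in the hole `H`: there is no edge of `H` with both
ends adjacent to `x`, and no path of length `2` in `H` whose ends are adjacent to `x` and whose
middle vertex is not. -/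
def NoSectorLenLe2 {V : Type} (G : SimpleGraph V) (H : Hole G) (x : V) : Prop :=
  (∀ i j : Fin H.len, (SimpleGraph.cycleGraph H.len).Adj i j →
      ¬ (G.Adj x (H.emb i) ∧ G.Adj x (H.emb j))) ∧
  (∀ i j k : Fin H.len, (SimpleGraph.cycleGraph H.len).Adj i j →
      (SimpleGraph.cycleGraph H.len).Adj j k → i ≠ k →
      ¬ (G.Adj x (H.emb i) ∧ ¬ G.Adj x (H.emb j) ∧ G.Adj x (H.emb k)))

/-- `X` and `Y` are anticomplete in `G`: disjoint, with no edge between them. -/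
def Anticomplete {V : Type} (G : SimpleGraph V) (X Y : Set V) : Prop :=
  Disjoint X Y ∧ ∀ x ∈ X, ∀ y ∈ Y, ¬ G.Adj x y

/-- An `H`-flare in `G`: to each vertex `H.emb i` of the hole `H`, assign a set `Φ i` of at
most one vertex, contained in the neighborhood of `H.emb i` and disjoint from `H`. -/
structure IsFlare {V : Type} (G : SimpleGraph V) (H : Hole G) (Φ : Fin H.len → Set V) : Prop where
  subset_nbhd : ∀ i, Φ i ⊆ G.neighborSet (H.emb i) \ H.verts
  subsingleton : ∀ i, (Φ i).Subsingleton

/-- A flare is full if `|Φ i| = 1` for every `i`. -/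
def IsFullFlare {V : Type} (G : SimpleGraph V) (H : Hole G) (Φ : Fin H.len → Set V) : Prop :=
  IsFlare G H Φ ∧ ∀ i, (Φ i).Nonempty

/-- A flare `Φ` is `d`-safe: for distinct hole vertices at distance at most `d` in `H`,
`Φ(h)` and `Φ[h'] = Φ(h') ∪ {h'}` are anticomplete in `G`. -/
def DSafe {V : Type} (G : SimpleGraph V) (H : Hole G) (Φ : Fin H.len → Set V) (d : ℕ) : Prop :=
  ∀ i j : Fin H.len, i ≠ j → (SimpleGraph.cycleGraph H.len).dist i j ≤ d →
    Anticomplete G (Φ i) (Φ j ∪ {H.emb j})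

lemma fin_eq_iff' {n : ℕ} [NeZero n] (j : Fin n) (a b : ℕ) :
    j + (a : Fin n) = j + (b : Fin n) ↔ a % n = b % n := by
  rw [add_right_inj, Fin.ext_iff, Fin.val_natCast, Fin.val_natCast]

lemma fin_adj_iff' {n : ℕ} [NeZero n] (hn : 2 ≤ n) (j : Fin n) (a b : ℕ) :
    (SimpleGraph.cycleGraph n).Adj (j + (a : Fin n)) (j + (b : Fin n)) ↔
      (b + 1) % n = a % n ∨ (a + 1) % n = b % n := by
  have h1 : ((1 : Fin n)).val = 1 := by
    rw [Fin.val_one']; exact Nat.mod_eq_of_lt (by omega)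
  have hv : ∀ y : Fin n, y.val = 1 ↔ y = 1 := by
    intro y; rw [Fin.ext_iff, h1]
  have key : ∀ c d : ℕ, (j + (d : Fin n)) - (j + (c : Fin n)) = 1 ↔ (c + 1) % n = d % n := by
    intro c d
    have h2 : (1 : Fin n) + (j + (c : Fin n)) = j + ((c + 1 : ℕ) : Fin n) := by
      push_cast; ring
    rw [sub_eq_iff_eq_add, h2, fin_eq_iff', eq_comm]
  rw [SimpleGraph.cycleGraph_adj']
  exact or_congr ((hv _).trans (key b a)) ((hv _).trans (key a b))

lemma mod_eq_iff'' {n a b : ℕ} (hn : 0 < n) (ha : a ≤ n) (hb : b ≤ n) :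
    a % n = b % n ↔ (a = b ∨ (a = n ∧ b = 0) ∨ (a = 0 ∧ b = n)) := by
  have h1 : a % n = if a = n then 0 else a := by
    split
    · simp [*]
    · exact Nat.mod_eq_of_lt (by omega)
  have h2 : b % n = if b = n then 0 else b := by
    split
    · simp [*]
    · exact Nat.mod_eq_of_lt (by omega)
  rw [h1, h2]
  split <;> split <;> omega

lemma fin_adj_decomp' {n : ℕ} [NeZero n] (hn : 2 ≤ n) {i j : Fin n}
    (h : (SimpleGraph.cycleGraph n).Adj i j) :
    i = j + ((1 : ℕ) : Fin n) ∨ i = j + ((n - 1 : ℕ) : Fin n) := by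
  have h1 : ((1 : Fin n)).val = 1 := by
    rw [Fin.val_one']; exact Nat.mod_eq_of_lt (by omega)
  have hm : ((n - 1 : ℕ) : Fin n) = -1 := by
    have h0 : ((n - 1 : ℕ) : Fin n) + 1 = 0 := by
      have e : ((n - 1 : ℕ) : Fin n) + 1 = ((n - 1 + 1 : ℕ) : Fin n) := by push_cast; ring
      rw [e, show n - 1 + 1 = n from by omega, Fin.natCast_self]
    exact eq_neg_of_add_eq_zero_left h0
  rw [SimpleGraph.cycleGraph_adj'] at h
  rcases h with h | h
  · left
    have h2 : i - j = 1 := Fin.ext (by rw [h, h1])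
    have h3 := sub_eq_iff_eq_add.mp h2
    rw [Nat.cast_one, h3]; ring
  · right
    have h2 : j - i = 1 := Fin.ext (by rw [h, h1])
    have h3 := sub_eq_iff_eq_add.mp h2
    have h4 : i = j - 1 := by rw [h3]; ring
    rw [hm, h4]; ring

/-- Let `r ≥ 2`, let `G` be finite, triangle-free and `4`-sunspot-free, let
`(L 0, …, L r)` be an `r`-leveling in `G`, let `H` be a hole of length at least `6` in the
subgraph induced on `L r`, and let `x ∈ L (r-1)`. Then there is no `x`-sector of length at
most `2` in `H`. -/
theorem stmt_8 {V : Type} [Fintype V] (r : ℕ) (hr : 2 ≤ r) (G : SimpleGraph V)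
    (htri : G.CliqueFree 3)
    (hspot : FourSunspotFree G)
    (L : ℕ → Set V) (hL : IsLeveling G r L)
    (H : Hole G) (hHsub : H.verts ⊆ L r) (hHlen : 6 ≤ H.len)
    (x : V) (hx : x ∈ L (r - 1)) :
    NoSectorLenLe2 G H x := by
  classical
  haveI : NeZero H.len := ⟨by omega⟩
  set n := H.len with hndef
  have hn6 : 6 ≤ n := hHlen
  have hinj : Function.Injective H.emb := H.emb.injective
  have hhole : ∀ a : Fin n, H.emb a ∈ L r := fun a => hHsub ⟨a, rfl⟩
  obtain ⟨hLne, hLdisj, hLnbr, hLcons⟩ := hL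
  have hne_of : ∀ i j : ℕ, i ≤ r → j ≤ r → i ≠ j → ∀ a ∈ L i, ∀ b ∈ L j, a ≠ b :=
    fun i j hi hj hij a ha b hb e =>
      Set.disjoint_left.mp (hLdisj i j hi hj hij) ha (e ▸ hb)
  have tri : ∀ p q : V, G.Adj p q → G.Adj x p → ¬ G.Adj x q :=
    fun p q h1 h2 h3 => htri {x, p, q} (SimpleGraph.is3Clique_triple_iff.mpr ⟨h2, h3, h1⟩)
  have aux : ∀ j : Fin n, G.Adj x (H.emb (j + ((1 : ℕ) : Fin n))) →
      G.Adj x (H.emb (j + ((n - 1 : ℕ) : Fin n))) → ¬ G.Adj x (H.emb j) → False := by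
    intro j hplus hminus hj
    have hadj : ∀ a b : ℕ, a < n → b < n →
        (G.Adj (H.emb (j + (a : Fin n))) (H.emb (j + (b : Fin n))) ↔
          (b + 1 = a ∨ (b + 1 = n ∧ a = 0) ∨ a + 1 = b ∨ (a + 1 = n ∧ b = 0))) := by
      intro a b ha hb
      rw [show G.Adj (H.emb (j + (a : Fin n))) (H.emb (j + (b : Fin n))) ↔
            (SimpleGraph.cycleGraph n).Adj (j + (a : Fin n)) (j + (b : Fin n)) from
            H.emb.map_rel_iff,
          fin_adj_iff' (by omega) j a b,
          mod_eq_iff'' (by omega) (by omega) (by omega),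
          mod_eq_iff'' (by omega) (by omega) (by omega)]
      omega
    have heq : ∀ a b : ℕ, a < n → b < n →
        (H.emb (j + (a : Fin n)) = H.emb (j + (b : Fin n)) ↔ a = b) := by
      intro a b ha hb
      constructor
      · intro h
        have h' := (fin_eq_iff' j a b).mp (hinj h)
        rw [mod_eq_iff'' (by omega) (by omega) (by omega)] at h'
        omega
      · rintro rfl; rfl
    have h0 : j + ((0 : ℕ) : Fin n) = j := by simp
    obtain ⟨u, hu, hux⟩ := hLnbr (r - 1) (by omega) (by omega) x hx
    have hu' : u ∈ L (r - 2) := by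
      rwa [show r - 1 - 1 = r - 2 from by omega] at hu
    have hUhole : ∀ a : Fin n, ¬ G.Adj u (H.emb a) := by
      intro a h
      rcases hLcons (r - 2) r (by omega) le_rfl (by omega) u hu' (H.emb a) (hhole a) h with
        h' | h' <;> omega
    have hXhole : ∀ a : Fin n, x ≠ H.emb a :=
      fun a => hne_of (r - 1) r (by omega) le_rfl (by omega) x hx (H.emb a) (hhole a)
    have hUne : ∀ a : Fin n, u ≠ H.emb a :=
      fun a => hne_of (r - 2) r (by omega) le_rfl (by omega) u hu' (H.emb a) (hhole a)
    have hXU : x ≠ u :=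
      fun e => hne_of (r - 1) (r - 2) (by omega) (by omega) (by omega) x hx u hu' e
    have hxm2 : ¬ G.Adj x (H.emb (j + ((n - 2 : ℕ) : Fin n))) := fun h =>
      tri _ _ ((hadj (n - 2) (n - 1) (by omega) (by omega)).mpr (by omega)) h hminus
    have hxp2 : ¬ G.Adj x (H.emb (j + ((2 : ℕ) : Fin n))) := fun h =>
      tri _ _ ((hadj 2 1 (by omega) (by omega)).mpr (by omega)) h hplus
    have a34 : G.Adj (H.emb (j + ((1 : ℕ) : Fin n))) (H.emb j) := by
      have h := (hadj 1 0 (by omega) (by omega)).mpr (by omega)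
      rwa [h0] at h
    have a41 : G.Adj (H.emb j) (H.emb (j + ((n - 1 : ℕ) : Fin n))) := by
      have h := (hadj 0 (n - 1) (by omega) (by omega)).mpr (by omega)
      rwa [h0] at h
    have a11 : G.Adj (H.emb (j + ((n - 1 : ℕ) : Fin n))) (H.emb (j + ((n - 2 : ℕ) : Fin n))) :=
      (hadj (n - 1) (n - 2) (by omega) (by omega)).mpr (by omega)
    have a33 : G.Adj (H.emb (j + ((1 : ℕ) : Fin n))) (H.emb (j + ((2 : ℕ) : Fin n))) :=
      (hadj 1 2 (by omega) (by omega)).mpr (by omega)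
    have n13 : ¬ G.Adj (H.emb (j + ((n - 1 : ℕ) : Fin n))) (H.emb (j + ((1 : ℕ) : Fin n))) :=
      fun h => by have := (hadj (n - 1) 1 (by omega) (by omega)).mp h; omega
    have n1y3 : ¬ G.Adj (H.emb (j + ((n - 1 : ℕ) : Fin n))) (H.emb (j + ((2 : ℕ) : Fin n))) :=
      fun h => by have := (hadj (n - 1) 2 (by omega) (by omega)).mp h; omega
    have n3y1 : ¬ G.Adj (H.emb (j + ((1 : ℕ) : Fin n))) (H.emb (j + ((n - 2 : ℕ) : Fin n))) :=
      fun h => by have := (hadj 1 (n - 2) (by omega) (by omega)).mp h; omega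
    have n4y1 : ¬ G.Adj (H.emb j) (H.emb (j + ((n - 2 : ℕ) : Fin n))) := by
      have h' : ¬ G.Adj (H.emb (j + ((0 : ℕ) : Fin n))) (H.emb (j + ((n - 2 : ℕ) : Fin n))) :=
        fun h => by have := (hadj 0 (n - 2) (by omega) (by omega)).mp h; omega
      rwa [h0] at h'
    have n4y3 : ¬ G.Adj (H.emb j) (H.emb (j + ((2 : ℕ) : Fin n))) := by
      have h' : ¬ G.Adj (H.emb (j + ((0 : ℕ) : Fin n))) (H.emb (j + ((2 : ℕ) : Fin n))) :=
        fun h => by have := (hadj 0 2 (by omega) (by omega)).mp h; omega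
      rwa [h0] at h'
    have ny1y3 : ¬ G.Adj (H.emb (j + ((n - 2 : ℕ) : Fin n))) (H.emb (j + ((2 : ℕ) : Fin n))) :=
      fun h => by have := (hadj (n - 2) 2 (by omega) (by omega)).mp h; omega
    refine hspot (H.emb (j + ((n - 1 : ℕ) : Fin n))) x (H.emb (j + ((1 : ℕ) : Fin n)))
      (H.emb j) (H.emb (j + ((n - 2 : ℕ) : Fin n))) u (H.emb (j + ((2 : ℕ) : Fin n)))
      ⟨?_, hminus.symm, hplus, a34, a41, a11, hux.symm, a33,
        n13, hj, (fun h => hUhole _ h.symm), n1y3, hxm2, hxp2, n3y1,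
        (fun h => hUhole _ h.symm), n4y1, (fun h => hUhole _ h.symm), n4y3,
        (fun h => hUhole _ h.symm), ny1y3, hUhole _⟩
    have e1 := (heq (n - 1) 1 (by omega) (by omega)).not.mpr (by omega)
    have e2 := (heq (n - 1) 0 (by omega) (by omega)).not.mpr (by omega)
    have e3 := (heq (n - 1) (n - 2) (by omega) (by omega)).not.mpr (by omega)
    have e4 := (heq (n - 1) 2 (by omega) (by omega)).not.mpr (by omega)
    have e5 := (heq 1 0 (by omega) (by omega)).not.mpr (by omega)
    have e6 := (heq 1 (n - 2) (by omega) (by omega)).not.mpr (by omega)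
    have e7 := (heq 1 2 (by omega) (by omega)).not.mpr (by omega)
    have e8 := (heq 0 (n - 2) (by omega) (by omega)).not.mpr (by omega)
    have e9 := (heq 0 2 (by omega) (by omega)).not.mpr (by omega)
    have e10 := (heq (n - 2) 2 (by omega) (by omega)).not.mpr (by omega)
    rw [h0] at e2 e5 e8 e9
    simp only [List.nodup_cons, List.mem_cons, List.not_mem_nil, or_false,
      List.nodup_nil, and_true, not_or, List.mem_singleton]
    exact ⟨⟨(hXhole _).symm, e1, e2, e3, (hUne _).symm, e4⟩,
      ⟨hXhole _, hXhole _, hXhole _, hXU, hXhole _⟩,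
      ⟨e5, e6, (hUne _).symm, e7⟩,
      ⟨e8, (hUne _).symm, e9⟩,
      ⟨(hUne _).symm, e10⟩,
      ⟨hUne _, not_false⟩⟩
  constructor
  · intro i j hij hcon
    exact tri _ _ (H.emb.map_rel_iff.mpr hij) hcon.1 hcon.2
  · rintro i j k hij hjk hik ⟨hxi, hxj, hxk⟩
    rcases fin_adj_decomp' (by omega) hij with h1 | h1 <;>
      rcases fin_adj_decomp' (by omega) hjk.symm with h2 | h2
    · exact hik (h1.trans h2.symm)
    · exact aux j (h1 ▸ hxi) (h2 ▸ hxk) hxj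
    · exact aux j (h2 ▸ hxk) (h1 ▸ hxi) hxj
    · exact hik (h1.trans h2.symm)
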